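/- arXiv:1812.02133 — 5 statements merged into one kernel-verified Lean document; each statement's English description precedes it below -/
import Mathlib

section
/- Let G be a locally compact second countable group acting on a complete probability space (X, μ) by measure-preserving transformations, and assume the action is measurable, i.e. the action map Φ : G × X → X, Φ(g, x) = gx, is measurable with respect to the completion of the product of the Borel σ-algebra of G (with a left Haar measure) and the σ-algebra of X. Then the action is continuous: for every measurable A ⊆ X and every ε > 0 there exists a neighborhood U of the identity in G such that μ(A Δ gA) ≤ ε for all g ∈ U. -/
open MeasureTheory Pointwise Topology
open scoped ENNReal symmDiff

/-- A neighborhood of the identity: a bounded (relatively compact) Borel subset of `G`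
containing an open set that contains the identity. -/
def IsIdNbhd (G : Type*) [TopologicalSpace G] [One G] [MeasurableSpace G] (U : Set G) : Prop :=
  MeasurableSet U ∧ IsCompact (closure U) ∧ ∃ V : Set G, IsOpen V ∧ (1 : G) ∈ V ∧ V ⊆ U

section Aux

open MeasurableSpace

/-- Rectangles are measurable for an explicit product σ-algebra. -/
lemma aux_prod_meas {α β : Type*} {mα : MeasurableSpace α} {m : MeasurableSpace β}
    {s : Set α} {t : Set β} (hs : MeasurableSet[mα] s) (ht : MeasurableSet[m] t) :
    MeasurableSet[mα.prod m] (s ×ˢ t) := by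
  have h1 : MeasurableSet[mα.comap Prod.fst] (Prod.fst ⁻¹' s : Set (α × β)) := ⟨s, hs, rfl⟩
  have h2 : MeasurableSet[m.comap Prod.snd] (Prod.snd ⁻¹' t : Set (α × β)) := ⟨t, ht, rfl⟩
  have hle1 : mα.comap Prod.fst ≤ mα.prod m := le_sup_left
  have hle2 : m.comap Prod.snd ≤ mα.prod m := le_sup_right
  rw [Set.prod_eq]
  exact (hle1 _ h1).inter (hle2 _ h2)

/-- `Prod.mk a` is measurable for explicit σ-algebras. -/
lemma aux_measurable_mk_left {α β : Type*} {mα : MeasurableSpace α} {m : MeasurableSpace β}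
    (a : α) : @Measurable β (α × β) m (mα.prod m) (Prod.mk a) := by
  rw [measurable_iff_comap_le]
  show (mα.prod m).comap (Prod.mk a) ≤ m
  rw [MeasurableSpace.prod, MeasurableSpace.comap_sup, MeasurableSpace.comap_comp,
    MeasurableSpace.comap_comp]
  have h1 : (Prod.fst ∘ Prod.mk a : β → α) = fun _ => a := rfl
  have h2 : (Prod.snd ∘ Prod.mk a : β → β) = id := rfl
  rw [h1, h2, MeasurableSpace.comap_id]
  refine sup_le ?_ le_rfl
  exact measurable_iff_comap_le.1 (@measurable_const α β mα m a)

/-- Sections of sets measurable for an explicit product σ-algebra. -/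
lemma aux_section_meas {α β : Type*} {mα : MeasurableSpace α} {m : MeasurableSpace β}
    {s : Set (α × β)} (hs : MeasurableSet[mα.prod m] s) (a : α) :
    MeasurableSet[m] (Prod.mk a ⁻¹' s) :=
  aux_measurable_mk_left a hs

/-- Every product-measurable set lies in a product σ-algebra whose second factor is
countably generated. -/
lemma aux_exists_countable_factor {α β : Type*} [mα : MeasurableSpace α]
    [mβ : MeasurableSpace β] {s : Set (α × β)} (hs : MeasurableSet s) :
    ∃ 𝒞 : Set (Set β), 𝒞.Countable ∧ (∀ c ∈ 𝒞, MeasurableSet c) ∧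
      MeasurableSet[mα.prod (generateFrom 𝒞)] s := by
  have hs' : MeasurableSet[generateFrom
      (Set.image2 (· ×ˢ ·) {u : Set α | MeasurableSet u} {v : Set β | MeasurableSet v})] s := by
    rw [generateFrom_prod]; exact hs
  clear hs
  induction s, hs' using MeasurableSpace.generateFrom_induction with
  | hC t ht _ =>
    obtain ⟨u, hu, v, hv, rfl⟩ := ht
    exact ⟨{v}, Set.countable_singleton v, by simpa using hv,
      aux_prod_meas hu (measurableSet_generateFrom rfl)⟩
  | empty => exact ⟨∅, Set.countable_empty, by simp, @MeasurableSet.empty _ (mα.prod (generateFrom ∅))⟩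
  | compl t ht IH =>
    obtain ⟨𝒞, h1, h2, h3⟩ := IH
    exact ⟨𝒞, h1, h2, h3.compl⟩
  | iUnion f hf IH =>
    choose 𝒞 h1 h2 h3 using IH
    refine ⟨⋃ n, 𝒞 n, Set.countable_iUnion h1, ?_, ?_⟩
    · intro c hc
      obtain ⟨n, hn⟩ := Set.mem_iUnion.1 hc
      exact h2 n c hn
    · refine MeasurableSet.iUnion fun n => ?_
      have hmono : mα.prod (generateFrom (𝒞 n)) ≤ mα.prod (generateFrom (⋃ n, 𝒞 n)) := by
        refine sup_le_sup_left (MeasurableSpace.comap_mono ?_) _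
        exact generateFrom_mono (Set.subset_iUnion 𝒞 n)
      exact hmono _ (h3 n)

end Aux

/-- If a l.c.s.c. group `G` acts on a complete probability space `(X, μ)` by
measure-preserving transformations and the action map `(g, x) ↦ g • x` is measurable with
respect to the completion of the product of the Borel σ-algebra of `G` (with a left Haar
measure `lam`) and the σ-algebra of `X`, then the action is continuous: for every measurable
`A` and every `ε > 0` there is a neighborhood `U` of the identity with `μ (A Δ gA) ≤ ε` for
all `g ∈ U`. -/
theorem stmt1 {G X : Type*} [Group G] [TopologicalSpace G] [IsTopologicalGroup G]
    [LocallyCompactSpace G] [SecondCountableTopology G]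
    [MeasurableSpace G] [BorelSpace G]
    [MulAction G X] [MeasurableSpace X]
    (lam : Measure G) [lam.IsHaarMeasure]
    (μ : Measure X) [IsProbabilityMeasure μ] [μ.IsComplete]
    (hmp : ∀ g : G, MeasurePreserving (fun x : X => g • x) μ μ)
    (hmeasact : ∀ A : Set X, MeasurableSet A →
      NullMeasurableSet ((fun p : G × X => p.1 • p.2) ⁻¹' A) (lam.prod μ)) :
    ∀ A : Set X, MeasurableSet A → ∀ ε : ℝ≥0∞, 0 < ε →
      ∃ U : Set G, IsIdNbhd G U ∧ ∀ g ∈ U, μ (A ∆ (g • A)) ≤ ε := by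
  intro A hA ε hε
  -- a convenient positive finite threshold
  set δ : ℝ≥0∞ := min ε 1 with hδdef
  have hδpos : 0 < δ := lt_min hε zero_lt_one
  have hδtop : δ ≠ ∞ := ne_top_of_le_ne_top ENNReal.one_ne_top (min_le_right _ _)
  have hδε : δ ≤ ε := min_le_left _ _
  have hδ4pos : 0 < δ / 4 := ENNReal.div_pos hδpos.ne' (by norm_num)
  have hδ4top : δ / 4 ≠ ∞ := (ENNReal.div_lt_top hδtop (by norm_num)).ne
  -- the action set and a measurable version of it
  set Φ : G × X → X := fun p => p.1 • p.2 with hΦ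
  obtain ⟨E', hE'sub, hE'meas, hE'ae⟩ :=
    (hmeasact A hA).exists_measurable_subset_ae_eq
  have hnull : (lam.prod μ) ((Φ ⁻¹' A) ∆ E') = 0 := by
    rw [measure_symmDiff_eq_zero_iff]
    exact hE'ae.symm
  have hsec : ∀ᵐ g ∂lam, μ (Prod.mk g ⁻¹' ((Φ ⁻¹' A) ∆ E')) = 0 :=
    Measure.measure_ae_null_of_prod_null hnull
  -- the bad null set N
  set N : Set G := toMeasurable lam {g : G | ¬ μ (Prod.mk g ⁻¹' ((Φ ⁻¹' A) ∆ E')) = 0} with hN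
  have hNmeas : MeasurableSet N := measurableSet_toMeasurable _ _
  have hNnull : lam N = 0 := by
    rw [hN, measure_toMeasurable]
    exact ae_iff.1 hsec
  -- sections of E' agree a.e. with translates of A
  have hgood : ∀ g : G, g ∉ N →
      μ (((fun x : X => g • x) ⁻¹' A) ∆ (Prod.mk g ⁻¹' E')) = 0 := by
    intro g hg
    have hg' : g ∉ {g : G | ¬ μ (Prod.mk g ⁻¹' ((Φ ⁻¹' A) ∆ E')) = 0} :=
      fun h => hg (subset_toMeasurable _ _ h)
    have := not_not.1 (fun h => hg' h)
    rwa [Set.preimage_symmDiff] at this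
  -- a countably generated sub-σ-algebra capturing E'
  obtain ⟨𝒞, h𝒞c, h𝒞m, hE'𝒞⟩ := aux_exists_countable_factor hE'meas
  have hle : MeasurableSpace.generateFrom 𝒞 ≤ ‹MeasurableSpace X› :=
    MeasurableSpace.generateFrom_le h𝒞m
  have hsecmeas : ∀ g : G, MeasurableSet[MeasurableSpace.generateFrom 𝒞] (Prod.mk g ⁻¹' E') :=
    fun g => aux_section_meas hE'𝒞 g
  -- the trimmed measure is separable
  set μ' : @Measure X (MeasurableSpace.generateFrom 𝒞) := μ.trim hle with hμ'
  have hfin : @IsFiniteMeasure X (MeasurableSpace.generateFrom 𝒞) μ' := by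
    refine @IsFiniteMeasure.mk X (MeasurableSpace.generateFrom 𝒞) μ' ?_
    rw [hμ', trim_measurableSet_eq hle (@MeasurableSet.univ X (MeasurableSpace.generateFrom 𝒞))]
    exact measure_lt_top μ _
  have hcg : @MeasurableSpace.CountablyGenerated X (MeasurableSpace.generateFrom 𝒞) :=
    @MeasurableSpace.CountablyGenerated.mk X (MeasurableSpace.generateFrom 𝒞) ⟨𝒞, h𝒞c, rfl⟩
  have hsf : @SigmaFinite X (MeasurableSpace.generateFrom 𝒞) μ' := @IsFiniteMeasure.toSigmaFinite X (MeasurableSpace.generateFrom 𝒞) μ' hfin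
  have hsep : @IsSeparable X (MeasurableSpace.generateFrom 𝒞) μ' := @isSeparable_of_sigmaFinite X (MeasurableSpace.generateFrom 𝒞) μ' hcg hsf
  obtain ⟨𝒜, h𝒜c, h𝒜d⟩ := @exists_countable_measureDense X (MeasurableSpace.generateFrom 𝒞) μ' hsep
  obtain ⟨C, hC⟩ := h𝒜c.exists_eq_range (@Measure.MeasureDense.nonempty X (MeasurableSpace.generateFrom 𝒞) μ' 𝒜 h𝒜d)
  have hCm' : ∀ n, MeasurableSet[MeasurableSpace.generateFrom 𝒞] (C n) :=
    fun n => @Measure.MeasureDense.measurable X (MeasurableSpace.generateFrom 𝒞) μ' 𝒜 h𝒜d _ (hC ▸ Set.mem_range_self n)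
  have hCmeas : ∀ n, MeasurableSet (C n) := fun n => hle _ (hCm' n)
  -- measurable functions g ↦ μ (E'_g Δ C n)
  have hfn : ∀ n, Measurable fun g : G => μ ((Prod.mk g ⁻¹' E') ∆ C n) := by
    intro n
    have h1 : MeasurableSet (E' ∆ (Set.univ ×ˢ C n)) :=
      hE'meas.symmDiff (MeasurableSet.univ.prod (hCmeas n))
    have h2 := measurable_measure_prodMk_left (ν := μ) h1
    convert h2 using 2 with g
    rw [Set.preimage_symmDiff]
    congr 1
    ext x
    simp
  -- the sets T n
  set T : ℕ → Set G := fun n => {g : G | μ ((Prod.mk g ⁻¹' E') ∆ C n) < δ / 4} \ N with hT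
  have hTmeas : ∀ n, MeasurableSet (T n) :=
    fun n => ((hfn n) measurableSet_Iio).diff hNmeas
  -- every g is in some level set
  have hcover : ∀ g : G, ∃ n, μ ((Prod.mk g ⁻¹' E') ∆ C n) < δ / 4 := by
    intro g
    obtain ⟨t, ht𝒜, hlt⟩ := @Measure.MeasureDense.approx X (MeasurableSpace.generateFrom 𝒞) μ' 𝒜 h𝒜d _ (hsecmeas g)
      (@measure_ne_top X (MeasurableSpace.generateFrom 𝒞) μ' hfin _) ((δ / 4).toReal)
      (ENNReal.toReal_pos hδ4pos.ne' hδ4top)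
    obtain ⟨n, rfl⟩ := (hC ▸ ht𝒜 : t ∈ Set.range C)
    refine ⟨n, ?_⟩
    rw [hμ', trim_measurableSet_eq hle ((hsecmeas g).symmDiff (hCm' n)),
      ENNReal.ofReal_toReal hδ4top] at hlt
    exact hlt
  -- some T n has positive measure
  have hposU : 0 < lam (⋃ n, T n) := by
    have h1 : Set.univ \ N ⊆ ⋃ n, T n := by
      intro g hg
      obtain ⟨n, hn⟩ := hcover g
      exact Set.mem_iUnion.2 ⟨n, hn, hg.2⟩
    calc 0 < lam Set.univ := IsOpen.measure_pos lam isOpen_univ ⟨1, trivial⟩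
    _ = lam (Set.univ \ N) := (measure_diff_null hNnull).symm
    _ ≤ lam (⋃ n, T n) := measure_mono h1
  obtain ⟨n, hn⟩ : ∃ n, 0 < lam (T n) := by
    by_contra h
    push_neg at h
    have : lam (⋃ n, T n) = 0 := measure_iUnion_null fun n => le_antisymm (h n) (zero_le)
    exact hposU.ne' this
  -- Steinhaus theorem
  have hst : T n / T n ∈ 𝓝 (1 : G) :=
    Measure.div_mem_nhds_one_of_haar_pos lam (T n) (hTmeas n) hn
  -- measure bound on the quotient set
  have hsmulmeas : ∀ c : G, MeasurableSet (c • A) := by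
    intro c
    have : (fun x : X => c⁻¹ • x) ⁻¹' A = c • A := by
      rw [Set.preimage_smul, inv_inv]
    rw [← this]
    exact (hmp c⁻¹).measurable hA
  have hbound : ∀ c ∈ T n / T n, μ (A ∆ (c • A)) ≤ ε := by
    intro c hc
    rw [Set.mem_div] at hc
    obtain ⟨g, hg, h, hh, rfl⟩ := hc
    have hpre : (fun x : X => g • x) ⁻¹' (A ∆ ((g / h) • A)) =
        ((fun x : X => g • x) ⁻¹' A) ∆ ((fun x : X => h • x) ⁻¹' A) := by
      rw [Set.preimage_symmDiff]
      congr 1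
      ext x
      simp only [Set.mem_preimage, Set.mem_smul_set_iff_inv_smul_mem, smul_smul,
        div_eq_mul_inv, mul_inv_rev, inv_inv, inv_mul_cancel_right]
    have heq : μ (A ∆ ((g / h) • A)) =
        μ (((fun x : X => g • x) ⁻¹' A) ∆ ((fun x : X => h • x) ⁻¹' A)) := by
      rw [← hpre]
      exact ((hmp g).measure_preimage
        ((hA.symmDiff (hsmulmeas (g / h))).nullMeasurableSet)).symm
    have hg0 : μ (((fun x : X => g • x) ⁻¹' A) ∆ (Prod.mk g ⁻¹' E')) = 0 := hgood g hg.2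
    have hh0 : μ (((fun x : X => h • x) ⁻¹' A) ∆ (Prod.mk h ⁻¹' E')) = 0 := hgood h hh.2
    have hg1 : μ ((Prod.mk g ⁻¹' E') ∆ C n) < δ / 4 := hg.1
    have hh1 : μ ((Prod.mk h ⁻¹' E') ∆ C n) < δ / 4 := hh.1
    calc μ (A ∆ ((g / h) • A))
        = μ (((fun x : X => g • x) ⁻¹' A) ∆ ((fun x : X => h • x) ⁻¹' A)) := heq
      _ ≤ μ (((fun x : X => g • x) ⁻¹' A) ∆ (Prod.mk g ⁻¹' E')) +
          μ ((Prod.mk g ⁻¹' E') ∆ ((fun x : X => h • x) ⁻¹' A)) := measure_symmDiff_le _ _ _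
      _ ≤ 0 + (μ ((Prod.mk g ⁻¹' E') ∆ C n) +
          μ (C n ∆ ((fun x : X => h • x) ⁻¹' A))) := by
          rw [hg0]
          exact add_le_add le_rfl (measure_symmDiff_le _ _ _)
      _ ≤ 0 + (μ ((Prod.mk g ⁻¹' E') ∆ C n) +
          (μ (C n ∆ (Prod.mk h ⁻¹' E')) +
            μ ((Prod.mk h ⁻¹' E') ∆ ((fun x : X => h • x) ⁻¹' A)))) := by
          exact add_le_add le_rfl (add_le_add le_rfl (measure_symmDiff_le _ _ _))
      _ = μ ((Prod.mk g ⁻¹' E') ∆ C n) + μ ((Prod.mk h ⁻¹' E') ∆ C n) := by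
          rw [symmDiff_comm (C n), symmDiff_comm (Prod.mk h ⁻¹' E') ((fun x : X => h • x) ⁻¹' A),
            hh0]
          ring
      _ ≤ δ / 4 + δ / 4 := add_le_add hg1.le hh1.le
      _ ≤ δ / 2 + δ / 2 := by gcongr <;> norm_num
      _ = δ := ENNReal.add_halves δ
      _ ≤ ε := hδε
  -- assemble the neighborhood
  obtain ⟨O, hOsub, hOopen, hO1⟩ := mem_nhds_iff.1 hst
  obtain ⟨K, hKcomp, hKnhds⟩ := exists_compact_mem_nhds (1 : G)
  refine ⟨O ∩ interior K,
    ⟨(hOopen.inter isOpen_interior).measurableSet, ?_,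
      O ∩ interior K, hOopen.inter isOpen_interior,
      ⟨hO1, mem_interior_iff_mem_nhds.2 hKnhds⟩, subset_rfl⟩, ?_⟩
  · exact hKcomp.closure.of_isClosed_subset isClosed_closure
      (closure_mono ((Set.inter_subset_right).trans interior_subset))
  · intro g hg
    exact hbound g (hOsub hg.1)
end

section
/- Let G be a unimodular locally compact second countable group with Haar measure λ, let U be a neighborhood of the identity, let G act measurably, continuously and measure-preservingly on a complete probability space (X, μ), and let (Y, ν, Ψ) be an external U-cross section of covolume c. Then for every measurable subset T ⊆ G × Y the image Ψ(T) is measurable in X, and if moreover Ψ restricted to T is injective, then c·μ(Ψ(T)) = (λ × ν)(T). -/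
open MeasureTheory Filter Topology Pointwise
open scoped ENNReal symmDiff

/-- `(Y, ν, Ψ)` is an external `U`-cross section of covolume `c` for the action of `G` on
`(X, μ)`: `Ψ` is a measurable `G`-equivariant map such that `Ψ(U × Y)` is measurable,
`Ψ` restricted to `U × Y` is a bijective measure-preserving isomorphism between
`(U × Y, λ × ν)` and `(Ψ(U × Y), c • μ)`, and `Ψ(G × Y)` is conull in `X`. -/
structure IsExtCrossSection {G X Y : Type*} [Group G] [TopologicalSpace G]
    [MeasurableSpace G] [MulAction G X] [MeasurableSpace X] [MeasurableSpace Y]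
    (lam : MeasureTheory.Measure G) (μ : MeasureTheory.Measure X) (U : Set G)
    (ν : MeasureTheory.Measure Y) (Ψ : G × Y → X) (c : ℝ≥0∞) : Prop where
  measurable : Measurable Ψ
  equivariant : ∀ (g h : G) (y : Y), Ψ (g * h, y) = g • Ψ (h, y)
  image_meas : MeasurableSet (Ψ '' (U ×ˢ (Set.univ : Set Y)))
  injOn : Set.InjOn Ψ (U ×ˢ (Set.univ : Set Y))
  iso : ∀ S : Set (G × Y), S ⊆ U ×ˢ (Set.univ : Set Y) → MeasurableSet S →
    MeasurableSet (Ψ '' S) ∧ c * μ (Ψ '' S) = (lam.prod ν) S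
  conull : μ (Set.range Ψ)ᶜ = 0

/-- For a measurable, continuous, measure-preserving action of a unimodular l.c.s.c. group
`G` on a complete probability space `(X, μ)` with external `U`-cross section `(Y, ν, Ψ)` of
covolume `c`: for every measurable `T ⊆ G × Y` the image `Ψ(T)` is measurable, and if `Ψ` is
injective on `T` then `c • μ (Ψ(T)) = (λ × ν)(T)`. -/
theorem stmt10 {G X Y : Type*} [Group G] [TopologicalSpace G] [IsTopologicalGroup G]
    [LocallyCompactSpace G] [SecondCountableTopology G]
    [MeasurableSpace G] [BorelSpace G]
    [MulAction G X] [MeasurableSpace X] [MeasurableSpace Y]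
    (lam : Measure G) [lam.IsHaarMeasure] [lam.IsMulRightInvariant]
    (U : Set G) (hU : IsIdNbhd G U)
    (μ : Measure X) [IsProbabilityMeasure μ] [μ.IsComplete]
    (hmp : ∀ g : G, MeasurePreserving (fun x : X => g • x) μ μ)
    (hcont : ∀ A : Set X, MeasurableSet A → ∀ ε : ℝ≥0∞, 0 < ε →
      ∃ V : Set G, IsIdNbhd G V ∧ ∀ g ∈ V, μ (A ∆ (g • A)) ≤ ε)
    (hmeasact : ∀ A : Set X, MeasurableSet A →
      NullMeasurableSet ((fun p : G × X => p.1 • p.2) ⁻¹' A) (lam.prod μ))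
    (ν : Measure Y) [IsProbabilityMeasure ν]
    (Ψ : G × Y → X) (c : ℝ≥0∞) (hc0 : 0 < c) (hctop : c < ⊤)
    (hcross : IsExtCrossSection lam μ U ν Ψ c) :
    ∀ T : Set (G × Y), MeasurableSet T →
      MeasurableSet (Ψ '' T) ∧
      (Set.InjOn Ψ T → c * μ (Ψ '' T) = (lam.prod ν) T) := by

  obtain ⟨hUm, hUc, V, hVopen, hV1, hVU⟩ := hU
  have hsmul_meas : ∀ (g : G) (A : Set X), MeasurableSet A → MeasurableSet (g • A) := by
    intro g A hA
    have h : g • A = (fun x : X => g⁻¹ • x) ⁻¹' A := by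
      rw [Set.preimage_smul, inv_inv]
    rw [h]
    exact (hmp g⁻¹).measurable hA
  have hsmul_mu : ∀ (g : G) (A : Set X), MeasurableSet A → μ (g • A) = μ A := by
    intro g A hA
    have h : g • A = (fun x : X => g⁻¹ • x) ⁻¹' A := by
      rw [Set.preimage_smul, inv_inv]
    rw [h]
    exact (hmp g⁻¹).measure_preimage hA.nullMeasurableSet
  have key : ∀ (g : G) (S : Set (G × Y)), S ⊆ (g • U) ×ˢ Set.univ → MeasurableSet S →
      MeasurableSet (Ψ '' S) ∧ c * μ (Ψ '' S) = (lam.prod ν) S := by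
    intro g S hSsub hSm
    set m : G × Y → G × Y := fun p => (g * p.1, p.2) with hm
    have hmmeas : Measurable m := (measurable_fst.const_mul g).prodMk measurable_snd
    have hmpm : MeasurePreserving m (lam.prod ν) (lam.prod ν) :=
      (measurePreserving_mul_left lam g).prod (MeasurePreserving.id ν)
    set S' : Set (G × Y) := m ⁻¹' S with hS'
    have hS'm : MeasurableSet S' := hmmeas hSm
    have hS'sub : S' ⊆ U ×ˢ Set.univ := by
      intro p hp
      have h1 : g * p.1 ∈ g • U := (hSsub hp).1
      rw [← smul_eq_mul, Set.smul_mem_smul_set_iff] at h1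
      exact ⟨h1, Set.mem_univ _⟩
    have hsurj : Function.Surjective m := fun q => ⟨(g⁻¹ * q.1, q.2), by simp [hm]⟩
    have hSim : m '' S' = S := Set.image_preimage_eq S hsurj
    have himg : Ψ '' S = g • (Ψ '' S') := by
      rw [← hSim, ← Set.image_comp, ← Set.image_smul, ← Set.image_comp]
      apply Set.image_congr
      intro p _
      simp only [Function.comp_apply, hm]
      exact hcross.equivariant g p.1 p.2
    obtain ⟨h1, h2⟩ := hcross.iso S' hS'sub hS'm
    constructor
    · rw [himg]; exact hsmul_meas g _ h1
    · rw [himg, hsmul_mu g _ h1, h2]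
      exact hmpm.measure_preimage hSm.nullMeasurableSet
  have hnbhd : ∀ g : G, g • V ∈ 𝓝 g := fun g =>
    (hVopen.smul g).mem_nhds ⟨1, hV1, mul_one g⟩
  obtain ⟨s, hsc, hscov⟩ := TopologicalSpace.countable_cover_nhds hnbhd
  have hsne : s.Nonempty := by
    by_contra h
    rw [Set.not_nonempty_iff_eq_empty] at h
    rw [h] at hscov
    simp only [Set.mem_empty_iff_false, Set.iUnion_of_empty, Set.iUnion_empty] at hscov
    exact (hscov ▸ Set.mem_univ (1 : G) : (1 : G) ∈ (∅ : Set G))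
  obtain ⟨f, hf⟩ := hsc.exists_eq_range hsne
  have hGcov : ⋃ n, f n • V = Set.univ := by
    rw [hf, Set.biUnion_range] at hscov; exact hscov
  intro T hT
  set W : ℕ → Set (G × Y) := fun n => (f n • V) ×ˢ (Set.univ : Set Y) with hW
  have hWm : ∀ n, MeasurableSet (W n) := fun n =>
    ((hVopen.smul (f n)).measurableSet).prod MeasurableSet.univ
  have hWcov : ⋃ n, W n = Set.univ := by
    ext p
    simp only [hW, Set.mem_iUnion, Set.mem_prod, Set.mem_univ, and_true, iff_true]
    have : p.1 ∈ ⋃ n, f n • V := hGcov ▸ Set.mem_univ p.1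
    exact Set.mem_iUnion.mp this
  set T' : ℕ → Set (G × Y) := fun n => T ∩ disjointed W n with hT'def
  have hT'm : ∀ n, MeasurableSet (T' n) := fun n =>
    hT.inter (MeasurableSet.disjointed hWm n)
  have hT'sub : ∀ n, T' n ⊆ (f n • U) ×ˢ Set.univ := fun n =>
    Set.inter_subset_right.trans ((disjointed_subset W n).trans
      (Set.prod_mono (Set.smul_set_mono hVU) le_rfl))
  have hT'union : ⋃ n, T' n = T := by
    rw [hT'def, ← Set.inter_iUnion, iUnion_disjointed, hWcov, Set.inter_univ]
  have hT'disj : Pairwise (Function.onFun Disjoint T') := fun i j hij =>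
    ((disjoint_disjointed W) hij).mono Set.inter_subset_right Set.inter_subset_right
  have hkey : ∀ n, MeasurableSet (Ψ '' T' n) ∧ c * μ (Ψ '' T' n) = (lam.prod ν) (T' n) :=
    fun n => key (f n) (T' n) (hT'sub n) (hT'm n)
  have himgT : Ψ '' T = ⋃ n, Ψ '' T' n := by
    rw [← hT'union, Set.image_iUnion]
  constructor
  · rw [himgT]
    exact MeasurableSet.iUnion fun n => (hkey n).1
  · intro hinj
    have himdisj : Pairwise (Function.onFun Disjoint (fun n => Ψ '' T' n)) := by
      intro i j hij
      rw [Function.onFun, Set.disjoint_left]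
      rintro x ⟨p, hp, rfl⟩ ⟨q, hq, hpq⟩
      have hpT : p ∈ T := hp.1
      have hqT : q ∈ T := hq.1
      have hqp : q = p := hinj hqT hpT hpq
      subst hqp
      exact Set.disjoint_left.mp (hT'disj hij) hp hq
    calc c * μ (Ψ '' T) = c * μ (⋃ n, Ψ '' T' n) := by rw [himgT]
      _ = c * ∑' n, μ (Ψ '' T' n) := by
          rw [measure_iUnion himdisj fun n => (hkey n).1]
      _ = ∑' n, c * μ (Ψ '' T' n) := ENNReal.tsum_mul_left.symm
      _ = ∑' n, (lam.prod ν) (T' n) := tsum_congr fun n => (hkey n).2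
      _ = (lam.prod ν) (⋃ n, T' n) := (measure_iUnion hT'disj hT'm).symm
      _ = (lam.prod ν) T := by rw [hT'union]
end

section
/- Let G be a unimodular locally compact second countable group with Haar measure λ, let U be a neighborhood of the identity, let G act measurably, continuously and measure-preservingly on a complete probability space (X, μ), and let (Y, ν, Ψ) be an external U-cross section of covolume c. Then there exists a measurable subset T ⊆ G × Y with U × Y ⊆ T such that Ψ restricted to T is injective, Ψ(T) is conull in X, and Ψ carries the measure (λ × ν) restricted to T to the measure c·μ; that is, Ψ|_T is a measure-preserving isomorphism between (T, (λ × ν)|_T) and (X, c·μ) up to null sets. -/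
open MeasureTheory Filter Topology Pointwise
open scoped ENNReal symmDiff

/-- For an external `U`-cross section `(Y, ν, Ψ)` of covolume `c`, there is a measurable
`T ⊆ G × Y` containing `U × Y` on which `Ψ` is injective, whose image is conull, and on which
`Ψ` carries `(λ × ν)|_T` to `c • μ`: a measure-preserving isomorphism up to null sets. -/
theorem stmt11 {G X Y : Type*} [Group G] [TopologicalSpace G] [IsTopologicalGroup G]
    [LocallyCompactSpace G] [SecondCountableTopology G]
    [MeasurableSpace G] [BorelSpace G]
    [MulAction G X] [MeasurableSpace X] [MeasurableSpace Y]
    (lam : Measure G) [lam.IsHaarMeasure] [lam.IsMulRightInvariant]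
    (U : Set G) (hU : IsIdNbhd G U)
    (μ : Measure X) [IsProbabilityMeasure μ] [μ.IsComplete]
    (hmp : ∀ g : G, MeasurePreserving (fun x : X => g • x) μ μ)
    (hcont : ∀ A : Set X, MeasurableSet A → ∀ ε : ℝ≥0∞, 0 < ε →
      ∃ V : Set G, IsIdNbhd G V ∧ ∀ g ∈ V, μ (A ∆ (g • A)) ≤ ε)
    (hmeasact : ∀ A : Set X, MeasurableSet A →
      NullMeasurableSet ((fun p : G × X => p.1 • p.2) ⁻¹' A) (lam.prod μ))
    (ν : Measure Y) [IsProbabilityMeasure ν]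
    (Ψ : G × Y → X) (c : ℝ≥0∞) (hc0 : 0 < c) (hctop : c < ⊤)
    (hcross : IsExtCrossSection lam μ U ν Ψ c) :
    ∃ T : Set (G × Y), MeasurableSet T ∧ U ×ˢ (Set.univ : Set Y) ⊆ T ∧
      Set.InjOn Ψ T ∧ μ ((Ψ '' T)ᶜ) = 0 ∧
      ∀ S : Set (G × Y), S ⊆ T → MeasurableSet S →
        MeasurableSet (Ψ '' S) ∧ c * μ (Ψ '' S) = (lam.prod ν) S := by
  classical
  obtain ⟨hUmeas, hUcomp, V, hVopen, hV1, hVU⟩ := hU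
  obtain ⟨t, htc, htU⟩ := TopologicalSpace.isOpen_iUnion_countable
    (fun g : G => g • V) (fun g => hVopen.smul g)
  have hunivV : (⋃ g : G, g • V) = Set.univ := by
    ext x
    simp only [Set.mem_iUnion, Set.mem_univ, iff_true]
    exact ⟨x, Set.mem_smul_set.mpr ⟨1, hV1, mul_one x⟩⟩
  have htne : t.Nonempty := by
    by_contra h
    rw [Set.not_nonempty_iff_eq_empty] at h
    rw [h, Set.biUnion_empty, hunivV] at htU
    exact Set.empty_ne_univ htU
  obtain ⟨f, hf⟩ := htc.exists_eq_range htne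
  set gs : ℕ → G := fun n => Nat.casesOn n 1 f with hgs
  have hcoverU : ∀ x : G, ∃ n, x ∈ gs n • U := by
    intro x
    have hx : x ∈ ⋃ g ∈ t, g • V := by rw [htU, hunivV]; trivial
    rw [hf] at hx
    obtain ⟨g, hg, hxg⟩ := Set.mem_iUnion₂.mp hx
    obtain ⟨k, rfl⟩ := hg
    exact ⟨k + 1, Set.smul_set_mono hVU hxg⟩
  set W : ℕ → Set G := fun n => gs n • U with hW
  set B : ℕ → Set X := fun n => Ψ '' ((W n) ×ˢ (Set.univ : Set Y)) with hB
  set Tn : ℕ → Set (G × Y) :=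
    fun n => ((W n) ×ˢ (Set.univ : Set Y)) ∩ Ψ ⁻¹' (⋃ k, ⋃ _ : k < n, B k)ᶜ with hTn
  -- smul of measurable sets in X is measurable and has the same measure
  have hsmul_eq : ∀ (g : G) (A : Set X), g • A = (fun x : X => g⁻¹ • x) ⁻¹' A := by
    intro g A
    ext x
    simp [Set.mem_smul_set_iff_inv_smul_mem]
  have hsmulX_meas : ∀ (g : G) (A : Set X), MeasurableSet A → MeasurableSet (g • A) := by
    intro g A hA
    rw [hsmul_eq]
    exact (hmp g⁻¹).measurable hA
  have hsmulX_measure : ∀ (g : G) (A : Set X), MeasurableSet A → μ (g • A) = μ A := by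
    intro g A hA
    rw [hsmul_eq]
    exact (hmp g⁻¹).measure_preimage hA.nullMeasurableSet
  have hW_meas : ∀ n, MeasurableSet (W n) := by
    intro n
    have : W n = (fun x : G => (gs n)⁻¹ * x) ⁻¹' U := by
      ext x
      simp [hW, Set.mem_smul_set_iff_inv_smul_mem]
    rw [this]
    exact (measurable_const_mul _) hUmeas
  have hB_eq : ∀ n, B n = gs n • (Ψ '' (U ×ˢ (Set.univ : Set Y))) := by
    intro n
    ext x
    constructor
    · rintro ⟨⟨h, y⟩, ⟨hh, -⟩, rfl⟩
      obtain ⟨u, hu, rfl⟩ := hh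
      refine Set.mem_smul_set.mpr ⟨Ψ (u, y), ⟨(u, y), ⟨hu, Set.mem_univ y⟩, rfl⟩, ?_⟩
      show gs n • Ψ (u, y) = Ψ (gs n * u, y)
      exact (hcross.equivariant (gs n) u y).symm
    · rintro ⟨x', ⟨⟨u, y⟩, ⟨hu, -⟩, rfl⟩, rfl⟩
      refine ⟨(gs n * u, y), ⟨?_, Set.mem_univ y⟩, hcross.equivariant (gs n) u y⟩
      rw [show gs n * u = gs n • u from rfl]
      exact Set.smul_mem_smul_set hu
  have hB_meas : ∀ n, MeasurableSet (B n) := fun n =>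
    (hB_eq n) ▸ hsmulX_meas _ _ hcross.image_meas
  have hA_meas : ∀ n, MeasurableSet (⋃ k, ⋃ _ : k < n, B k) := fun n =>
    MeasurableSet.biUnion (Set.to_countable _) fun k _ => hB_meas k
  have hTn_meas : ∀ n, MeasurableSet (Tn n) := fun n =>
    ((hW_meas n).prod MeasurableSet.univ).inter (hcross.measurable (hA_meas n).compl)
  -- injectivity on each slab
  have hWinj : ∀ n, Set.InjOn Ψ ((W n) ×ˢ (Set.univ : Set Y)) := by
    intro n
    rintro ⟨p1, p2⟩ hp ⟨q1, q2⟩ hq hpq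
    have hp1 : p1 ∈ W n := hp.1
    have hq1 : q1 ∈ W n := hq.1
    obtain ⟨u, hu, hup⟩ := hp1
    obtain ⟨v, hv, hvq⟩ := hq1
    have h1 : Ψ (p1, p2) = gs n • Ψ (u, p2) := by
      rw [← hup]
      exact hcross.equivariant (gs n) u p2
    have h2 : Ψ (q1, q2) = gs n • Ψ (v, q2) := by
      rw [← hvq]
      exact hcross.equivariant (gs n) v q2
    rw [h1, h2] at hpq
    have h3 : Ψ (u, p2) = Ψ (v, q2) := smul_left_cancel (gs n) hpq
    have h4 : (u, p2) = (v, q2) :=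
      hcross.injOn ⟨hu, Set.mem_univ _⟩ ⟨hv, Set.mem_univ _⟩ h3
    have h5 : u = v := congrArg Prod.fst h4
    have h6 : p2 = q2 := congrArg Prod.snd h4
    rw [← hup, ← hvq, h5, h6]
  -- the key piece lemma
  have hpiece : ∀ n (S : Set (G × Y)), S ⊆ (W n) ×ˢ (Set.univ : Set Y) → MeasurableSet S →
      MeasurableSet (Ψ '' S) ∧ c * μ (Ψ '' S) = (lam.prod ν) S := by
    intro n S hSsub hSmeas
    set g := gs n with hg
    set φ : G × Y → G × Y := fun p => (g * p.1, p.2) with hφ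
    have hφmeas : Measurable φ := (measurable_fst.const_mul g).prodMk measurable_snd
    set S' := φ ⁻¹' S with hS'
    have hS'meas : MeasurableSet S' := hφmeas hSmeas
    have hS'sub : S' ⊆ U ×ˢ (Set.univ : Set Y) := by
      rintro ⟨a, y⟩ ha
      have h1 : g * a ∈ g • U := (hSsub ha).1
      refine ⟨?_, Set.mem_univ y⟩
      rwa [show g * a = g • a from rfl, Set.smul_mem_smul_set_iff] at h1
    have hIm : Ψ '' S = g • (Ψ '' S') := by
      ext x
      constructor
      · rintro ⟨⟨a, y⟩, ha, rfl⟩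
        refine Set.mem_smul_set.mpr ⟨Ψ (g⁻¹ * a, y), ⟨(g⁻¹ * a, y), ?_, rfl⟩, ?_⟩
        · show φ (g⁻¹ * a, y) ∈ S
          simpa [hφ, mul_inv_cancel_left] using ha
        · show g • Ψ (g⁻¹ * a, y) = Ψ (a, y)
          rw [← hcross.equivariant g (g⁻¹ * a) y, mul_inv_cancel_left]
      · rintro ⟨x', ⟨⟨a, y⟩, ha, rfl⟩, rfl⟩
        exact ⟨(g * a, y), ha, hcross.equivariant g a y⟩
    obtain ⟨hm', he'⟩ := hcross.iso S' hS'sub hS'meas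
    have hmp2 : MeasurePreserving φ (lam.prod ν) (lam.prod ν) :=
      (measurePreserving_mul_left lam g).prod (MeasurePreserving.id ν)
    have hS'measure : (lam.prod ν) S' = (lam.prod ν) S :=
      hmp2.measure_preimage hSmeas.nullMeasurableSet
    constructor
    · rw [hIm]
      exact hsmulX_meas g _ hm'
    · rw [hIm, hsmulX_measure g _ hm', he', hS'measure]
  have hPsi_mem_B : ∀ n p, p ∈ Tn n → Ψ p ∈ B n := fun n p hp => ⟨p, hp.1, rfl⟩
  have hTdisj : ∀ m n, m < n → Disjoint (Tn m) (Tn n) := by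
    intro m n hmn
    rw [Set.disjoint_left]
    intro p hpm hpn
    exact hpn.2 (Set.mem_iUnion₂.mpr ⟨m, hmn, hPsi_mem_B m p hpm⟩)
  have hTdisj' : Pairwise (Function.onFun Disjoint Tn) := fun m n h =>
    h.lt_or_gt.elim (hTdisj m n) (fun hl => (hTdisj n m hl).symm)
  have hTinj : Set.InjOn Ψ (⋃ n, Tn n) := by
    intro p hp q hq hpq
    obtain ⟨m, hpm⟩ := Set.mem_iUnion.mp hp
    obtain ⟨n, hqn⟩ := Set.mem_iUnion.mp hq
    rcases lt_trichotomy m n with h | h | h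
    · refine absurd ?_ hqn.2
      have hmem : Ψ q ∈ B m := by rw [← hpq]; exact hPsi_mem_B m p hpm
      exact Set.mem_iUnion₂.mpr ⟨m, h, hmem⟩
    · subst h
      exact hWinj m hpm.1 hqn.1 hpq
    · refine absurd ?_ hpm.2
      have hmem : Ψ p ∈ B n := by rw [hpq]; exact hPsi_mem_B n q hqn
      exact Set.mem_iUnion₂.mpr ⟨n, h, hmem⟩
  have hTcover : Set.range Ψ ⊆ Ψ '' (⋃ n, Tn n) := by
    rintro x ⟨⟨h, y⟩, rfl⟩
    have hex : ∃ n, Ψ (h, y) ∈ B n := by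
      obtain ⟨n, hn⟩ := hcoverU h
      exact ⟨n, ⟨(h, y), ⟨hn, Set.mem_univ y⟩, rfl⟩⟩
    obtain ⟨p, hp, hpx⟩ := Nat.find_spec hex
    refine ⟨p, Set.mem_iUnion.mpr ⟨Nat.find hex, hp, ?_⟩, hpx⟩
    intro hmem
    obtain ⟨k, hk, hkB⟩ := Set.mem_iUnion₂.mp hmem
    exact Nat.find_min hex hk (hpx ▸ hkB)
  have hconull : μ ((Ψ '' (⋃ n, Tn n))ᶜ) = 0 :=
    measure_mono_null (Set.compl_subset_compl.mpr hTcover) hcross.conull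
  refine ⟨⋃ n, Tn n, MeasurableSet.iUnion hTn_meas, ?_, hTinj, hconull, ?_⟩
  · intro p hp
    refine Set.mem_iUnion.mpr ⟨0, ⟨?_, ?_⟩⟩
    · have hW0 : W 0 = U := by simp [hW, hgs]
      rw [hW0]
      exact hp
    · simp
  · intro S hS hSmeas
    set Sn : ℕ → Set (G × Y) := fun n => S ∩ Tn n with hSn
    have hSn_meas : ∀ n, MeasurableSet (Sn n) := fun n => hSmeas.inter (hTn_meas n)
    have hSn_sub : ∀ n, Sn n ⊆ (W n) ×ˢ (Set.univ : Set Y) := fun n =>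
      Set.inter_subset_right.trans Set.inter_subset_left
    have hSn_union : S = ⋃ n, Sn n := by
      ext p
      simp only [Set.mem_iUnion, hSn, Set.mem_inter_iff]
      constructor
      · intro hp
        obtain ⟨n, hn⟩ := Set.mem_iUnion.mp (hS hp)
        exact ⟨n, hp, hn⟩
      · rintro ⟨n, hp, -⟩
        exact hp
    have hSn_disj : Pairwise (Function.onFun Disjoint Sn) := fun m n h =>
      Disjoint.mono Set.inter_subset_right Set.inter_subset_right (hTdisj' h)
    have hImSn := fun n => hpiece n (Sn n) (hSn_sub n) (hSn_meas n)
    have hImdisj : Pairwise (Function.onFun Disjoint (fun n => Ψ '' Sn n)) := by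
      intro m n hmn
      rw [Function.onFun, Set.disjoint_left]
      rintro x ⟨p, hp, rfl⟩ ⟨q, hq, hqx⟩
      have hpT : p ∈ ⋃ i, Tn i := Set.mem_iUnion.mpr ⟨m, hp.2⟩
      have hqT : q ∈ ⋃ i, Tn i := Set.mem_iUnion.mpr ⟨n, hq.2⟩
      have heq : q = p := hTinj hqT hpT hqx
      exact Set.disjoint_left.mp (hSn_disj hmn) hp (heq ▸ hq)
    have hUnionIm : Ψ '' S = ⋃ n, Ψ '' Sn n := by rw [hSn_union, Set.image_iUnion]
    constructor
    · rw [hUnionIm]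
      exact MeasurableSet.iUnion fun n => (hImSn n).1
    · rw [hUnionIm, measure_iUnion hImdisj (fun n => (hImSn n).1),
        ← ENNReal.tsum_mul_left, tsum_congr fun n => (hImSn n).2,
        ← measure_iUnion hSn_disj hSn_meas, ← hSn_union]
end

section
/- Let G be a unimodular locally compact second countable group with Haar measure λ, let U be a neighborhood of the identity, let G act measurably, continuously and measure-preservingly on a complete probability space (X, μ), and let (Y, ν, Ψ) be an external U-cross section. Then there exists a countable family of measurable, measure-preserving partial bijections φ_j : D_j → Y of (Y, ν), defined on measurable subsets D_j ⊆ Y, such that for every j and every y ∈ D_j there exists g ∈ G with g·Ψ(id_G, y) = Ψ(id_G, φ_j(y)), and such that the smallest equivalence relation on Y containing the graphs of all the φ_j coincides, after restriction to a suitable conull subset of Y, with the relation R_Y = {(y, y′) ∈ Y × Y : ∃ g ∈ G with g·Ψ(id_G, y) = Ψ(id_G, y′)}. -/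
open MeasureTheory Filter Topology Pointwise
open scoped ENNReal symmDiff

set_option linter.unusedSectionVars false
set_option maxHeartbeats 1000000

section Aux
variable {G X Y : Type*} [Group G] [TopologicalSpace G] [IsTopologicalGroup G]
  [LocallyCompactSpace G] [SecondCountableTopology G] [MeasurableSpace G] [BorelSpace G]
  [MulAction G X] [MeasurableSpace X] [MeasurableSpace Y]
  {lam : Measure G} [lam.IsHaarMeasure] [lam.IsMulRightInvariant]
  {μ : Measure X} {U : Set G} {ν : Measure Y} [IsProbabilityMeasure ν]
  {Ψ : G × Y → X} {c : ℝ≥0∞}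

lemma piece (hcross : IsExtCrossSection lam μ U ν Ψ c)
    (hmp : ∀ g : G, MeasurePreserving (fun x : X => g • x) μ μ)
    {V : Set G} (hVU : V ⊆ U) (g : G)
    {P : Set (G × Y)} (hP : MeasurableSet P) (hPsub : ∀ p ∈ P, g⁻¹ * Prod.fst p ∈ V) :
    MeasurableSet (Ψ '' P) ∧ c * μ (Ψ '' P) = (lam.prod ν) P := by
  set τ : G × Y → G × Y := fun p => (g * p.1, p.2) with hτ
  have hτmp : MeasurePreserving τ (lam.prod ν) (lam.prod ν) :=
    (measurePreserving_mul_left lam g).prod (MeasurePreserving.id ν)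
  set P' : Set (G × Y) := τ ⁻¹' P with hP'
  have hP'meas : MeasurableSet P' := hτmp.measurable hP
  have hP'sub : P' ⊆ U ×ˢ (Set.univ : Set Y) := by
    rintro ⟨a, y⟩ hp
    refine ⟨hVU ?_, trivial⟩
    have := hPsub _ hp
    simpa [hτ] using this
  obtain ⟨him, hmeq⟩ := hcross.iso P' hP'sub hP'meas
  have himg : Ψ '' P = (fun x => g⁻¹ • x) ⁻¹' (Ψ '' P') := by
    ext x
    constructor
    · rintro ⟨⟨a, y⟩, hp, rfl⟩
      refine ⟨(g⁻¹ * a, y), ?_, ?_⟩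
      · show τ _ ∈ P
        simpa [hτ, mul_assoc] using hp
      · have := hcross.equivariant g⁻¹ a y
        simpa using this
    · rintro ⟨⟨a, y⟩, hq, hx⟩
      refine ⟨τ (a, y), hq, ?_⟩
      have h1 : Ψ (g * a, y) = g • Ψ (a, y) := hcross.equivariant g a y
      have h2 : Ψ (a, y) = g⁻¹ • x := hx
      rw [hτ]
      simp only [h1, h2, smul_inv_smul]
  have hmeas : MeasurableSet (Ψ '' P) := by
    rw [himg]; exact (hmp g⁻¹).measurable him
  refine ⟨hmeas, ?_⟩
  have : μ (Ψ '' P) = μ (Ψ '' P') := by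
    rw [himg]
    exact (hmp g⁻¹).measure_preimage him.nullMeasurableSet
  rw [this, hmeq]
  exact (hτmp.measure_preimage hP.nullMeasurableSet)

lemma key_image (hcross : IsExtCrossSection lam μ U ν Ψ c)
    (hmp : ∀ g : G, MeasurePreserving (fun x : X => g • x) μ μ)
    {V : Set G} (hVU : V ⊆ U) (hVmeas : MeasurableSet V)
    (e : ℕ → G) (hcov : ∀ g : G, ∃ k, (e k)⁻¹ * g ∈ V)
    {T : Set (G × Y)} (hT : MeasurableSet T) :
    MeasurableSet (Ψ '' T) ∧ (Set.InjOn Ψ T → c * μ (Ψ '' T) = (lam.prod ν) T) := by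
  set A : ℕ → Set (G × Y) := fun k => T ∩ ((fun h => (e k)⁻¹ * h) ⁻¹' V) ×ˢ Set.univ with hA
  have hAmeas : ∀ k, MeasurableSet (A k) := fun k =>
    hT.inter ((measurable_const_mul _ hVmeas).prod MeasurableSet.univ)
  have hAunion : (⋃ k, A k) = T := by
    apply Set.Subset.antisymm
    · exact Set.iUnion_subset fun k => Set.inter_subset_left
    · rintro ⟨a, y⟩ hp
      obtain ⟨k, hk⟩ := hcov a
      exact Set.mem_iUnion.2 ⟨k, hp, hk, trivial⟩
  set p : ℕ → Set (G × Y) := disjointed A with hp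
  have hpmeas : ∀ k, MeasurableSet (p k) := MeasurableSet.disjointed hAmeas
  have hpsub : ∀ k, ∀ q ∈ p k, (e k)⁻¹ * Prod.fst q ∈ V := by
    intro k q hq
    have : q ∈ A k := disjointed_subset A k hq
    exact this.2.1
  have hppiece := fun k => piece hcross hmp hVU (e k) (hpmeas k) (hpsub k)
  have hpunion : (⋃ k, p k) = T := by rw [hp, iUnion_disjointed, hAunion]
  have himgU : Ψ '' T = ⋃ k, Ψ '' p k := by rw [← hpunion, Set.image_iUnion]
  have hmeas : MeasurableSet (Ψ '' T) := by
    rw [himgU]; exact MeasurableSet.iUnion fun k => (hppiece k).1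
  refine ⟨hmeas, fun hinj => ?_⟩
  have hpdisj : Pairwise (Function.onFun Disjoint p) := disjoint_disjointed A
  have hpsubT : ∀ k, p k ⊆ T := fun k => (disjointed_subset A k).trans Set.inter_subset_left
  have himdisj : Pairwise (Function.onFun Disjoint fun k => Ψ '' p k) := by
    intro i j hij
    have h1 : Ψ '' (p i ∩ p j) = Ψ '' p i ∩ Ψ '' p j :=
      Set.InjOn.image_inter hinj (hpsubT i) (hpsubT j)
    have h2 : p i ∩ p j = ∅ := Set.disjoint_iff_inter_eq_empty.1 (hpdisj hij)
    simp only [Function.onFun, Set.disjoint_iff_inter_eq_empty, ← h1, h2, Set.image_empty]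
  rw [himgU, measure_iUnion himdisj fun k => (hppiece k).1, ENNReal.tsum_mul_left.symm]
  have : ∀ k, c * μ (Ψ '' p k) = (lam.prod ν) (p k) := fun k => (hppiece k).2
  rw [tsum_congr this, ← measure_iUnion hpdisj hpmeas, hpunion]

end Aux

/-- The cross equivalence relation: there is a countable family of measurable,
measure-preserving partial bijections `φ_j : D_j → Y` of `(Y, ν)` whose graphs consist of
pairs in the same `G`-orbit (through `Ψ(id_G, ·)`), and such that the smallest equivalence
relation containing the graphs of the `φ_j` coincides, on a conull subset of `Y`, with
`R_Y = {(y, y') : ∃ g ∈ G, g • Ψ(id_G, y) = Ψ(id_G, y')}`. -/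
theorem stmt12 {G X Y : Type*} [Group G] [TopologicalSpace G] [IsTopologicalGroup G]
    [LocallyCompactSpace G] [SecondCountableTopology G]
    [MeasurableSpace G] [BorelSpace G]
    [MulAction G X] [MeasurableSpace X] [MeasurableSpace Y]
    (lam : Measure G) [lam.IsHaarMeasure] [lam.IsMulRightInvariant]
    (U : Set G) (hU : IsIdNbhd G U)
    (μ : Measure X) [IsProbabilityMeasure μ] [μ.IsComplete]
    (hmp : ∀ g : G, MeasurePreserving (fun x : X => g • x) μ μ)
    (hcont : ∀ A : Set X, MeasurableSet A → ∀ ε : ℝ≥0∞, 0 < ε →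
      ∃ V : Set G, IsIdNbhd G V ∧ ∀ g ∈ V, μ (A ∆ (g • A)) ≤ ε)
    (hmeasact : ∀ A : Set X, MeasurableSet A →
      NullMeasurableSet ((fun p : G × X => p.1 • p.2) ⁻¹' A) (lam.prod μ))
    (ν : Measure Y) [IsProbabilityMeasure ν]
    (Ψ : G × Y → X) (c : ℝ≥0∞) (hc0 : 0 < c) (hctop : c < ⊤)
    (hcross : IsExtCrossSection lam μ U ν Ψ c) :
    ∃ (D : ℕ → Set Y) (φ : ℕ → Y → Y),
      (∀ j, MeasurableSet (D j)) ∧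
      (∀ j, Set.InjOn (φ j) (D j)) ∧
      (∀ j, ∀ S ⊆ D j, MeasurableSet S →
        MeasurableSet (φ j '' S) ∧ ν (φ j '' S) = ν S) ∧
      (∀ j, ∀ y ∈ D j, ∃ g : G, g • Ψ (1, y) = Ψ (1, φ j y)) ∧
      ∃ Y₀ : Set Y, ν (Y₀ᶜ) = 0 ∧ ∀ y ∈ Y₀, ∀ y' ∈ Y₀,
        ((∃ g : G, g • Ψ (1, y) = Ψ (1, y')) ↔
          Relation.EqvGen (fun a b => ∃ j, a ∈ D j ∧ φ j a = b) y y') := by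
  classical
  obtain ⟨hUmeas, hUcomp, V, hVopen, hV1, hVU⟩ := hU
  set θ : Y → X := fun y => Ψ (1, y) with hθdef
  have hθmeas : Measurable θ :=
    hcross.measurable.comp (measurable_const.prodMk measurable_id)
  have hθ : ∀ (g : G) (y : Y), Ψ (g, y) = g • θ y := fun g y => by
    have := hcross.equivariant g 1 y; rwa [mul_one] at this
  have h1U : (1 : G) ∈ U := hVU hV1
  have hkey : ∀ {g : G} {y y' : Y}, g ∈ U → g • θ y = θ y' → g = 1 ∧ y = y' := by
    intro g y y' hg h
    have h' : Ψ (g, y) = Ψ (1, y') := by rw [hθ]; exact h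
    have := hcross.injOn (Set.mk_mem_prod hg trivial) (Set.mk_mem_prod h1U trivial) h'
    exact ⟨congrArg Prod.fst this, congrArg Prod.snd this⟩
  -- a small symmetric open neighborhood V₁ with V₁ * V₁ ⊆ V
  obtain ⟨V₂, hV₂open, hV₂1, hV₂mul⟩ := exists_open_nhds_one_mul_subset (hVopen.mem_nhds hV1)
  set V₁ : Set G := V₂ ∩ V₂⁻¹ with hV₁def
  have hV₁open : IsOpen V₁ := hV₂open.inter hV₂open.inv
  have hV₁1 : (1 : G) ∈ V₁ := ⟨hV₂1, by simpa using hV₂1⟩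
  have hV₁symm : ∀ a ∈ V₁, a⁻¹ ∈ V₁ := by rintro a ⟨h1, h2⟩; exact ⟨h2, by simpa using h1⟩
  have hV₁mul : ∀ a ∈ V₁, ∀ b ∈ V₁, a * b ∈ V := fun a ha b hb =>
    hV₂mul (Set.mul_mem_mul ha.1 hb.1)
  have hV₁V : V₁ ⊆ V := fun a ha => by simpa using hV₁mul a ha 1 hV₁1
  have hV₁U : V₁ ⊆ U := hV₁V.trans hVU
  have hV₁meas : MeasurableSet V₁ := hV₁open.measurableSet
  have : Nonempty G := ⟨1⟩
  obtain ⟨d, hd⟩ := TopologicalSpace.exists_dense_seq G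
  -- the countable family W n
  set W : ℕ → Set G := fun n =>
    (fun h => h * (d (Nat.unpair n).1)⁻¹) ⁻¹' V₁ ∩ (fun h => (d (Nat.unpair n).2)⁻¹ * h) ⁻¹' V₁
    with hWdef
  have hWmeas : ∀ n, MeasurableSet (W n) := fun n =>
    ((measurable_mul_const _) hV₁meas).inter ((measurable_const_mul _) hV₁meas)
  have hWU : ∀ n, ∀ a ∈ W n, ∀ b ∈ W n, a * b⁻¹ ∈ U ∧ a⁻¹ * b ∈ U := by
    intro n a ha b hb
    constructor
    · have h1 : (a * (d (Nat.unpair n).1)⁻¹) * (b * (d (Nat.unpair n).1)⁻¹)⁻¹ ∈ V :=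
        hV₁mul _ ha.1 _ (hV₁symm _ hb.1)
      have e1 : (a * (d (Nat.unpair n).1)⁻¹) * (b * (d (Nat.unpair n).1)⁻¹)⁻¹ = a * b⁻¹ := by
        group
      rw [e1] at h1
      exact hVU h1
    · have h1 : ((d (Nat.unpair n).2)⁻¹ * a)⁻¹ * ((d (Nat.unpair n).2)⁻¹ * b) ∈ V :=
        hV₁mul _ (hV₁symm _ ha.2) _ hb.2
      have e1 : ((d (Nat.unpair n).2)⁻¹ * a)⁻¹ * ((d (Nat.unpair n).2)⁻¹ * b) = a⁻¹ * b := by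
        group
      rw [e1] at h1
      exact hVU h1
  have hWcov : ∀ g : G, ∃ n, g ∈ W n := by
    intro g
    have hj : ∃ j, g * (d j)⁻¹ ∈ V₁ := by
      have hopen : IsOpen {h : G | g * h⁻¹ ∈ V₁} :=
        hV₁open.preimage (continuous_const.mul continuous_inv)
      exact hd.exists_mem_open hopen ⟨g, by simpa using hV₁1⟩
    have hk : ∃ k, (d k)⁻¹ * g ∈ V₁ := by
      have hopen : IsOpen {h : G | h⁻¹ * g ∈ V₁} :=
        hV₁open.preimage (continuous_inv.mul continuous_const)
      exact hd.exists_mem_open hopen ⟨g, by simpa using hV₁1⟩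
    obtain ⟨j, hj⟩ := hj
    obtain ⟨k, hk⟩ := hk
    refine ⟨Nat.pair j k, ?_, ?_⟩ <;> simp only [Nat.unpair_pair]
    · exact hj
    · exact hk
  -- the countable cover used for image measurability
  have hcov : ∀ g : G, ∃ k, (d k)⁻¹ * g ∈ V := by
    intro g
    have hopen : IsOpen {h : G | h⁻¹ * g ∈ V} :=
      hVopen.preimage (continuous_inv.mul continuous_const)
    exact hd.exists_mem_open hopen ⟨g, by simpa using hV1⟩
  have hVmeas : MeasurableSet V := hVopen.measurableSet
  have hKI := fun {T : Set (G × Y)} (hT : MeasurableSet T) =>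
    key_image hcross hmp hVU hVmeas d hcov hT
  -- the domains D n and selectors
  set D : ℕ → Set Y := fun n => {y | ∃ g, g ∈ W n ∧ ∃ y', g • θ y = θ y'} with hDdef
  have hDchoice : ∀ (n : ℕ) (y : Y), ∃ (g : G) (y' : Y),
      (y ∈ D n → g ∈ W n ∧ g • θ y = θ y') ∧ (y ∉ D n → g = 1 ∧ y' = y) := by
    intro n y
    by_cases h : y ∈ D n
    · obtain ⟨g, hg, y', hy'⟩ := h
      exact ⟨g, y', fun _ => ⟨hg, hy'⟩, fun h' => absurd ⟨g, hg, y', hy'⟩ h'⟩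
    · exact ⟨1, y, fun h' => absurd h' h, fun _ => ⟨rfl, rfl⟩⟩
  choose gsel φ hsel hnsel using hDchoice
  -- uniqueness within a single W n
  have huniq : ∀ (n : ℕ) (g h : G) (y y' y'' : Y), g ∈ W n → h ∈ W n →
      g • θ y = θ y' → h • θ y = θ y'' → g = h ∧ y' = y'' := by
    intro n g h y y' y'' hg hh h1 h2
    have hU' : h * g⁻¹ ∈ U := (hWU n h hh g hg).1
    have h3 : (h * g⁻¹) • θ y' = θ y'' := by
      rw [← h1, smul_smul, inv_mul_cancel_right]; exact h2
    obtain ⟨he, hy⟩ := hkey hU' h3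
    exact ⟨(mul_inv_eq_one.mp he).symm, hy⟩
  -- injectivity
  have hφinj : ∀ n, Set.InjOn (φ n) (D n) := by
    intro n y₁ hy₁ y₂ hy₂ heq
    obtain ⟨hg₁, hθ₁⟩ := hsel n y₁ hy₁
    obtain ⟨hg₂, hθ₂⟩ := hsel n y₂ hy₂
    have hU' : (gsel n y₂)⁻¹ * gsel n y₁ ∈ U := (hWU n _ hg₂ _ hg₁).2
    have h3 : ((gsel n y₂)⁻¹ * gsel n y₁) • θ y₁ = θ y₂ := by
      rw [mul_smul, hθ₁, heq, ← hθ₂, inv_smul_smul]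
    exact (hkey hU' h3).2
  -- measurability of "return" sets
  have hDeq : ∀ (n : ℕ) (t : Set G),
      {y | ∃ g, g ∈ W n ∩ t ∧ ∃ y', g • θ y = θ y'} =
        θ ⁻¹' (Ψ '' (((W n ∩ t)⁻¹) ×ˢ (Set.univ : Set Y))) := by
    intro n t
    ext y
    simp only [Set.mem_setOf_eq, Set.mem_preimage, Set.mem_image]
    constructor
    · rintro ⟨g, hg, y', hy'⟩
      refine ⟨(g⁻¹, y'), ⟨by simpa using hg, trivial⟩, ?_⟩
      rw [hθ, ← hy', inv_smul_smul]
    · rintro ⟨⟨a, y'⟩, ⟨ha, -⟩, hΨ⟩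
      rw [hθ] at hΨ
      refine ⟨a⁻¹, by simpa using ha, y', ?_⟩
      rw [← hΨ, inv_smul_smul]
  have hDmeas : ∀ n, MeasurableSet (D n) := by
    intro n
    have h0 : D n = {y | ∃ g, g ∈ W n ∩ Set.univ ∧ ∃ y', g • θ y = θ y'} := by
      simp [hDdef]
    rw [h0, hDeq n Set.univ]
    exact hθmeas ((hKI (((hWmeas n).inter MeasurableSet.univ).inv.prod MeasurableSet.univ)).1)
  -- measurability of the selectors
  have hgselmeas : ∀ n, Measurable (gsel n) := by
    intro n t ht
    have h1 : gsel n ⁻¹' t =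
        {y | ∃ g, g ∈ W n ∩ t ∧ ∃ y', g • θ y = θ y'} ∪ ((D n)ᶜ ∩ {y : Y | (1 : G) ∈ t}) := by
      ext y
      simp only [Set.mem_preimage, Set.mem_union, Set.mem_setOf_eq, Set.mem_inter_iff,
        Set.mem_compl_iff]
      constructor
      · intro hy
        by_cases h : y ∈ D n
        · left
          obtain ⟨hg, hθ'⟩ := hsel n y h
          exact ⟨gsel n y, ⟨hg, hy⟩, φ n y, hθ'⟩
        · right; exact ⟨h, by rwa [(hnsel n y h).1] at hy⟩
      · rintro (⟨g, ⟨hgW, hgt⟩, y', hy'⟩ | ⟨h, h1t⟩)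
        · have hD : y ∈ D n := ⟨g, hgW, y', hy'⟩
          obtain ⟨hg, hθ'⟩ := hsel n y hD
          have := (huniq n _ _ _ _ _ hg hgW hθ' hy').1
          rwa [this]
        · rw [(hnsel n y h).1]; exact h1t
    rw [h1, hDeq n t]
    refine (hθmeas ((hKI (((hWmeas n).inter ht).inv.prod MeasurableSet.univ)).1)).union
      (((hDmeas n).compl).inter ?_)
    by_cases h1t : (1 : G) ∈ t
    · simpa [h1t] using (MeasurableSet.univ : MeasurableSet (Set.univ : Set Y))
    · simpa [h1t] using (MeasurableSet.empty : MeasurableSet (∅ : Set Y))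
  -- images of measurable sets
  have himages : ∀ n, ∀ S ⊆ D n, MeasurableSet S →
      MeasurableSet (φ n '' S) ∧ ν (φ n '' S) = ν S := by
    intro n S hSD hS
    have hBeq : φ n '' S = θ ⁻¹' (Ψ '' ((W n) ×ˢ S)) := by
      ext b
      simp only [Set.mem_image, Set.mem_preimage]
      constructor
      · rintro ⟨y, hyS, rfl⟩
        obtain ⟨hg, hθ'⟩ := hsel n y (hSD hyS)
        exact ⟨(gsel n y, y), ⟨hg, hyS⟩, by rw [hθ]; exact hθ'⟩
      · rintro ⟨⟨g, y⟩, ⟨hgW, hyS⟩, hΨ⟩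
        rw [hθ] at hΨ
        have hD : y ∈ D n := ⟨g, hgW, b, hΨ⟩
        obtain ⟨hg, hθ'⟩ := hsel n y hD
        obtain ⟨-, h2⟩ := huniq n _ _ _ _ _ hg hgW hθ' hΨ
        exact ⟨y, hyS, h2⟩
    have hB : MeasurableSet (φ n '' S) := by
      rw [hBeq]; exact hθmeas ((hKI ((hWmeas n).prod hS)).1)
    refine ⟨hB, ?_⟩
    -- the thickened graph T
    set T : Set (G × Y) := {p : G × Y | p.2 ∈ S ∧ p.1 * (gsel n p.2)⁻¹ ∈ V₁} with hTdef
    have hTmeas : MeasurableSet T := by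
      have hf : Measurable fun p : G × Y => p.1 * (gsel n p.2)⁻¹ :=
        measurable_fst.mul (((hgselmeas n).comp measurable_snd).inv)
      exact ((measurable_snd hS).inter (hf hV₁meas))
    have hswap : ∀ y ∈ S, ∀ h : G, Ψ (h, y) = Ψ (h * (gsel n y)⁻¹, φ n y) := by
      intro y hy h
      obtain ⟨hg, hθ'⟩ := hsel n y (hSD hy)
      rw [hθ, hθ, ← hθ', smul_smul, inv_mul_cancel_right]
    have hTinj : Set.InjOn Ψ T := by
      rintro ⟨h₁, y₁⟩ ⟨hy₁S, hv₁⟩ ⟨h₂, y₂⟩ ⟨hy₂S, hv₂⟩ heq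
      have e₁ := hswap y₁ hy₁S h₁
      have e₂ := hswap y₂ hy₂S h₂
      have heq' : Ψ (h₁ * (gsel n y₁)⁻¹, φ n y₁) = Ψ (h₂ * (gsel n y₂)⁻¹, φ n y₂) :=
        e₁.symm.trans (heq.trans e₂)
      have hpair := hcross.injOn (Set.mk_mem_prod (hV₁U hv₁) trivial)
        (Set.mk_mem_prod (hV₁U hv₂) trivial) heq'
      have hsnd : φ n y₁ = φ n y₂ := congrArg Prod.snd hpair
      have hy : y₁ = y₂ := hφinj n (hSD hy₁S) (hSD hy₂S) hsnd
      have hfst : h₁ * (gsel n y₁)⁻¹ = h₂ * (gsel n y₂)⁻¹ := congrArg Prod.fst hpair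
      subst hy
      have : h₁ = h₂ := by
        have := mul_right_cancel (by rw [hfst] : h₁ * (gsel n y₁)⁻¹ = h₂ * (gsel n y₁)⁻¹)
        exact this
      rw [this]
    have hTimg : Ψ '' T = Ψ '' (V₁ ×ˢ (φ n '' S)) := by
      ext x
      constructor
      · rintro ⟨⟨h, y⟩, ⟨hyS, hv⟩, rfl⟩
        exact ⟨(h * (gsel n y)⁻¹, φ n y), ⟨hv, Set.mem_image_of_mem _ hyS⟩,
          (hswap y hyS h).symm⟩
      · rintro ⟨⟨v, b⟩, ⟨hv, hb⟩, rfl⟩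
        obtain ⟨y, hyS, rfl⟩ := hb
        refine ⟨(v * gsel n y, y), ⟨hyS, by simpa using hv⟩, ?_⟩
        rw [hswap y hyS (v * gsel n y), mul_inv_cancel_right]
    have hslice : ∀ y : Y, lam ((fun h => (h, y)) ⁻¹' T) = S.indicator (fun _ => lam V₁) y := by
      intro y
      by_cases hy : y ∈ S
      · have : (fun h : G => (h, y)) ⁻¹' T = (fun h : G => h * (gsel n y)⁻¹) ⁻¹' V₁ := by
          ext h; simp [hTdef, hy]
        rw [this, measure_preimage_mul_right lam _ V₁, Set.indicator_of_mem hy]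
      · have : (fun h : G => (h, y)) ⁻¹' T = ∅ := by
          ext h; simp [hTdef, hy]
        rw [this, measure_empty, Set.indicator_of_notMem hy]
    have hTmeasure : (lam.prod ν) T = lam V₁ * ν S := by
      rw [Measure.prod_apply_symm hTmeas, lintegral_congr hslice,
        lintegral_indicator hS _, setLIntegral_const]
    have h1 := (hKI hTmeas).2 hTinj
    have h2 := (hcross.iso (V₁ ×ˢ (φ n '' S))
      (Set.prod_mono hV₁U (Set.subset_univ _)) (hV₁meas.prod hB)).2
    rw [Measure.prod_prod] at h2
    rw [hTimg, h2] at h1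
    have hne0 : lam V₁ ≠ 0 := (hV₁open.measure_pos lam ⟨1, hV₁1⟩).ne'
    have hnetop : lam V₁ ≠ ⊤ :=
      ne_top_of_le_ne_top hUcomp.measure_lt_top.ne
        (measure_mono (hV₁U.trans subset_closure))
    have hcanc := congrArg (fun z => (lam V₁)⁻¹ * z) (h1.trans hTmeasure)
    simpa [← mul_assoc, ENNReal.inv_mul_cancel hne0 hnetop] using hcanc
  -- assemble
  refine ⟨D, φ, hDmeas, hφinj, himages, ?_, Set.univ, by simp, ?_⟩
  · intro j y hyD
    exact ⟨gsel j y, (hsel j y hyD).2⟩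
  · intro y hy y' hy'
    clear hy hy'
    constructor
    · rintro ⟨g, hg⟩
      obtain ⟨n, hn⟩ := hWcov g
      have hD' : y ∈ D n := ⟨g, hn, y', hg⟩
      obtain ⟨hgW, hθ'⟩ := hsel n y hD'
      have h2 := (huniq n _ _ _ _ _ hgW hn hθ' hg).2
      exact Relation.EqvGen.rel y y' ⟨n, hD', h2⟩
    · intro h
      induction h with
      | rel a b hab =>
        obtain ⟨j, haD, rfl⟩ := hab
        exact ⟨gsel j a, (hsel j a haD).2⟩
      | refl a => exact ⟨1, one_smul _ _⟩
      | symm a b _ ih =>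
        obtain ⟨g, hg⟩ := ih
        exact ⟨g⁻¹, by rw [← hg, inv_smul_smul]⟩
      | trans a b cc _ _ ih1 ih2 =>
        obtain ⟨g₁, h₁⟩ := ih1
        obtain ⟨g₂, h₂⟩ := ih2
        exact ⟨g₂ * g₁, by rw [mul_smul, h₁, h₂]⟩
end

section
/- Let G be a locally compact second countable group with a left Haar measure. For every neighborhood V of the identity and every compact subset A ⊆ G there exists a symmetric neighborhood W of the identity such that for every lattice Γ ≤ G with Γ ∩ V = {id_G} and every subgroup K of G with K ⊆ A, every element of Γ ∩ W·K has finite order. -/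
open MeasureTheory Filter Topology Pointwise
open scoped ENNReal

private lemma closure_subset_mul_aux {G : Type*} [Group G] [TopologicalSpace G]
    [IsTopologicalGroup G] (S : Set G) {U : Set G} (hU : U ∈ 𝓝 (1 : G)) :
    closure S ⊆ S * U := by
  intro x hx
  have hU' : U⁻¹ ∈ 𝓝 (1 : G) := inv_mem_nhds_one G hU
  have hnb : x • U⁻¹ ∈ 𝓝 x := by
    have := (smul_mem_nhds_smul_iff x (t := U⁻¹) (a := (1 : G))).2 hU'
    simpa using this
  obtain ⟨y, hyt, hyS⟩ := mem_closure_iff_nhds.1 hx _ hnb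
  obtain ⟨b, hb, hby⟩ := hyt
  have hbU : b⁻¹ ∈ U := Set.mem_inv.1 hb
  have : x = y * b⁻¹ := by
    rw [← hby]; simp [smul_eq_mul, mul_assoc]
  rw [this]
  exact Set.mul_mem_mul hyS hbU

private lemma exists_pow_mem_aux {G : Type*} [Group G] [TopologicalSpace G]
    [IsTopologicalGroup G] {P V' : Set G} (hP : IsCompact P) (hV' : IsOpen V')
    (h1 : (1 : G) ∈ V') {k : G} (hk : ∀ n : ℕ, k ^ (n + 1) ∈ P) :
    ∃ N : ℕ, 0 < N ∧ k ^ N ∈ V' := by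
  set u : ℕ → G := fun n => k ^ (n + 1) with hu
  have hle : Filter.map u Filter.atTop ≤ 𝓟 P := by
    rw [Filter.le_principal_iff, Filter.mem_map]
    exact Filter.univ_mem' fun n => hk n
  obtain ⟨x, -, hx⟩ := hP hle
  have hconj : (fun g : G => x * g * x⁻¹) ⁻¹' V' ∈ 𝓝 (1 : G) := by
    have hc : Continuous fun g : G => x * g * x⁻¹ := by continuity
    have h1' : x * (1 : G) * x⁻¹ ∈ V' := by simpa using h1
    exact hc.continuousAt.preimage_mem_nhds (hV'.mem_nhds h1')
  obtain ⟨V₀, hV₀, hsplit⟩ := exists_nhds_split_inv hconj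
  have hO : (fun y : G => x⁻¹ * y) ⁻¹' V₀ ∈ 𝓝 x := by
    have hc : Continuous fun y : G => x⁻¹ * y := by continuity
    refine hc.continuousAt.preimage_mem_nhds ?_
    simpa using hV₀
  have hfreq := (mapClusterPt_iff_frequently.1 hx) _ hO
  rw [Filter.frequently_atTop] at hfreq
  obtain ⟨m, -, hm⟩ := hfreq 0
  obtain ⟨n, hnm, hn⟩ := hfreq (m + 1)
  refine ⟨n - m, by omega, ?_⟩
  have h2 := hsplit _ hn _ hm
  rw [Set.mem_preimage] at h2
  have hpow : u n * (u m)⁻¹ = k ^ (n - m) := by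
    rw [mul_inv_eq_iff_eq_mul, ← pow_add]
    have : n - m + (m + 1) = n + 1 := by omega
    rw [this]
  have hsim : x * ((x⁻¹ * u n) / (x⁻¹ * u m)) * x⁻¹ = u n * (u m)⁻¹ := by
    simp [div_eq_mul_inv, mul_inv_rev, mul_assoc]
  rw [hsim, hpow] at h2
  exact h2



/-- For every neighborhood `V` of the identity and every compact `A ⊆ G` there is a symmetric
neighborhood `W` of the identity such that for every lattice `Γ ≤ G` with `Γ ∩ V = {1}` and
every subgroup `K ⊆ A`, every element of `Γ ∩ W • K` has finite order. -/
theorem stmt19 {G : Type*} [Group G] [TopologicalSpace G] [IsTopologicalGroup G]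
    [LocallyCompactSpace G] [SecondCountableTopology G]
    [MeasurableSpace G] [BorelSpace G]
    (lam : Measure G) [lam.IsHaarMeasure]
    (V : Set G) (hV : IsIdNbhd G V) (A : Set G) (hA : IsCompact A) :
    ∃ W : Set G, IsIdNbhd G W ∧ W⁻¹ = W ∧
      ∀ Γ : Subgroup G, DiscreteTopology ↥Γ →
        (∃ D : Set G, MeasurableSet D ∧
          IsFundamentalDomain (Subgroup.op Γ) D lam ∧ lam D < ⊤) →
        (Γ : Set G) ∩ V = {1} →
        ∀ K : Subgroup G, (K : Set G) ⊆ A →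
          ∀ γ ∈ (Γ : Set G) ∩ (W * (K : Set G)), IsOfFinOrder γ := by
  obtain ⟨-, -, V₁, hV₁open, hV₁1, hV₁V⟩ := hV
  obtain ⟨C, hCcomp, hCnhds⟩ := exists_compact_mem_nhds (1 : G)
  -- the closure of `A` is compact
  have hclA : IsCompact (closure A) :=
    IsCompact.of_isClosed_subset (hA.mul hCcomp) isClosed_closure
      (closure_subset_mul_aux A hCnhds)
  -- the compact set of elements all of whose powers lie in `closure A`
  set P : Set G := closure A ∩ ⋂ m : ℕ, (fun g : G => g ^ (m + 1)) ⁻¹' closure A with hP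
  have hPc : IsCompact P :=
    IsCompact.of_isClosed_subset hclA
      (isClosed_closure.inter (isClosed_iInter fun m =>
        isClosed_closure.preimage (continuous_pow (m + 1)))) Set.inter_subset_left
  -- for every `k ∈ P` find a uniform power landing in `V₁`
  have key : ∀ k : G, k ∈ P → ∃ N : ℕ, ∃ U O : Set G, 0 < N ∧ IsOpen U ∧ IsOpen O ∧
      (1 : G) ∈ U ∧ k ∈ O ∧ ∀ w ∈ U, ∀ k' ∈ O, (w * k') ^ N ∈ V₁ := by
    intro k hkP
    obtain ⟨Nk, hNk, hNkmem⟩ :=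
      exists_pow_mem_aux hclA hV₁open hV₁1 (fun n => Set.mem_iInter.1 hkP.2 n)
    have hc : Continuous fun p : G × G => (p.1 * p.2) ^ Nk :=
      (continuous_fst.mul continuous_snd).pow Nk
    have hmem : (fun p : G × G => (p.1 * p.2) ^ Nk) ⁻¹' V₁ ∈ 𝓝 ((1 : G), k) := by
      refine hc.continuousAt.preimage_mem_nhds (hV₁open.mem_nhds ?_)
      simpa using hNkmem
    rw [mem_nhds_prod_iff'] at hmem
    obtain ⟨U, O, hUo, hU1, hOo, hkO, hsub⟩ := hmem
    exact ⟨Nk, U, O, hNk, hUo, hOo, hU1, hkO,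
      fun w hwU k' hk'O => hsub (Set.mk_mem_prod hwU hk'O)⟩
  choose N U O hNpos hUopen hOopen hU1 hkO hpows using key
  obtain ⟨t, ht⟩ := hPc.elim_finite_subcover (fun i : ↥P => O i i.2)
    (fun i => hOopen i i.2) (fun x hx => Set.mem_iUnion.2 ⟨⟨x, hx⟩, hkO x hx⟩)
  -- the neighborhood `W`
  set W0 : Set G := interior C ∩ ⋂ i ∈ t, U (i : G) i.2 with hW0
  have hW0open : IsOpen W0 :=
    isOpen_interior.inter (isOpen_biInter_finset fun i _ => hUopen i i.2)
  have hW0mem : (1 : G) ∈ W0 :=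
    ⟨mem_interior_iff_mem_nhds.2 hCnhds, Set.mem_iInter₂.2 fun i _ => hU1 i i.2⟩
  refine ⟨W0 ∩ W0⁻¹, ?_, ?_, ?_⟩
  · refine ⟨(hW0open.inter hW0open.inv).measurableSet, ?_,
      W0 ∩ W0⁻¹, hW0open.inter hW0open.inv, ⟨hW0mem, by simpa using hW0mem⟩, subset_rfl⟩
    refine IsCompact.of_isClosed_subset (hCcomp.mul hCcomp) isClosed_closure ?_
    refine (closure_mono ?_).trans (closure_subset_mul_aux C hCnhds)
    exact fun x hx => interior_subset hx.1.1
  · rw [Set.inter_inv, inv_inv, Set.inter_comm]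
  · intro Γ _ _ hΓV K hKA γ hγ
    obtain ⟨hγΓ, hγWK⟩ := hγ
    rw [Set.mem_mul] at hγWK
    obtain ⟨w, hw, k, hk, hwk⟩ := hγWK
    have hkP : k ∈ P := by
      refine ⟨subset_closure (hKA hk), Set.mem_iInter.2 fun m => ?_⟩
      exact subset_closure (hKA (SetLike.mem_coe.2 (pow_mem (SetLike.mem_coe.1 hk) (m + 1))))
    obtain ⟨i, hit, hiO⟩ := Set.mem_iUnion₂.1 (ht hkP)
    have hwU : w ∈ U (i : G) i.2 := Set.mem_iInter₂.1 hw.1.2 i hit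
    have hpow : γ ^ N (i : G) i.2 ∈ V₁ := by
      rw [← hwk]
      exact hpows (i : G) i.2 w hwU k hiO
    have hmem1 : γ ^ N (i : G) i.2 ∈ ((Γ : Set G) ∩ V) :=
      ⟨SetLike.mem_coe.2 (pow_mem (SetLike.mem_coe.1 hγΓ) _), hV₁V hpow⟩
    rw [hΓV] at hmem1
    exact isOfFinOrder_iff_pow_eq_one.2
      ⟨N (i : G) i.2, hNpos (i : G) i.2, Set.mem_singleton_iff.1 hmem1⟩
end
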